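/- Let R be a commutative domain over a field of characteristic zero, δ a locally nilpotent derivation of R, and f ∈ R. If f divides δ(f), then δ(f) = 0. -/
import Mathlib

open Finset

lemma lnd_iterate_leibniz {K R : Type*} [Field K] [CommRing R] [Algebra K R]
    (δ : Derivation K R R) (n : ℕ) (p q : R) :
    (⇑δ)^[n] (p * q) =
      ∑ k ∈ range n.succ, (n.choose k • ((⇑δ)^[n - k] p * (⇑δ)^[k] q)) := by
  induction n with
  | zero => simp [Finset.range]
  | succ n IH =>
    have hmul : ∀ a b : R, δ (a * b) = δ a * b + a * δ b := by
      intro a b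
      rw [δ.leibniz]; simp [smul_eq_mul]; ring
    calc
      (⇑δ)^[n + 1] (p * q) =
          δ (∑ k ∈ range n.succ, n.choose k • ((⇑δ)^[n - k] p * (⇑δ)^[k] q)) := by
        rw [Function.iterate_succ_apply', IH]
      _ = (∑ k ∈ range n.succ,
            n.choose k • ((⇑δ)^[n - k + 1] p * (⇑δ)^[k] q)) +
          ∑ k ∈ range n.succ,
            n.choose k • ((⇑δ)^[n - k] p * (⇑δ)^[k + 1] q) := by
        rw [map_sum]
        simp_rw [map_nsmul, hmul, Function.iterate_succ_apply', smul_add, sum_add_distrib]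
      _ = (∑ k ∈ range n.succ,
                n.choose k.succ • ((⇑δ)^[n - k] p * (⇑δ)^[k + 1] q)) +
              1 • ((⇑δ)^[n + 1] p * (⇑δ)^[0] q) +
            ∑ k ∈ range n.succ, n.choose k • ((⇑δ)^[n - k] p * (⇑δ)^[k + 1] q) := ?_
      _ = ((∑ k ∈ range n.succ, n.choose k • ((⇑δ)^[n - k] p * (⇑δ)^[k + 1] q)) +
              ∑ k ∈ range n.succ,
                n.choose k.succ • ((⇑δ)^[n - k] p * (⇑δ)^[k + 1] q)) +
            1 • ((⇑δ)^[n + 1] p * (⇑δ)^[0] q) := by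
        rw [add_comm, add_assoc]
      _ = (∑ i ∈ range n.succ,
              (n + 1).choose (i + 1) • ((⇑δ)^[n + 1 - (i + 1)] p * (⇑δ)^[i + 1] q)) +
            1 • ((⇑δ)^[n + 1] p * (⇑δ)^[0] q) := by
        simp_rw [Nat.choose_succ_succ, Nat.succ_sub_succ, add_smul, sum_add_distrib]
      _ = ∑ k ∈ range (n + 1).succ,
            (n + 1).choose k • ((⇑δ)^[n + 1 - k] p * (⇑δ)^[k] q) := by
        rw [sum_range_succ' _ n.succ]
        simp
    -- middle step goal
    rw [sum_range_succ' (fun k => n.choose k • ((⇑δ)^[n - k + 1] p * (⇑δ)^[k] q)) n]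
    congr 1
    rw [sum_range_succ, Nat.choose_succ_self, zero_smul, add_zero]
    congr 1
    · exact sum_congr rfl fun k hk => by rw [mem_range] at hk; congr 3; omega
    · simp

/-- If `δ` is a locally nilpotent derivation of a commutative domain `R` over a field `K`
of characteristic zero and `f ∣ δ f`, then `δ f = 0`. -/
theorem dvd_self_image_of_lnd {K R : Type*} [Field K] [CharZero K]
    [CommRing R] [IsDomain R] [Algebra K R]
    (δ : Derivation K R R)
    (hln : ∀ f : R, ∃ m : ℕ, (δ.toLinearMap ^ m) f = 0)
    (f : R) (h : f ∣ δ f) : δ f = 0 := by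
  classical
  haveI : CharZero R := charZero_of_injective_algebraMap (algebraMap K R).injective
  by_contra hne
  have hf0 : f ≠ 0 := fun h0 => hne (by simp [h0])
  obtain ⟨c, hc⟩ := h
  have hc0 : c ≠ 0 := by rintro rfl; exact hne (by simpa using hc)
  have hln' : ∀ a : R, ∃ m : ℕ, (⇑δ)^[m] a = 0 := fun a =>
    (hln a).imp fun m hm => by rwa [Module.End.pow_apply] at hm
  have hstab : ∀ (a : R) (j k : ℕ), (⇑δ)^[j] a = 0 → j ≤ k → (⇑δ)^[k] a = 0 := by
    intro a j k hj hjk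
    obtain ⟨d, rfl⟩ := Nat.exists_eq_add_of_le hjk
    rw [add_comm, Function.iterate_add_apply, hj]
    exact Function.iterate_fixed (map_zero δ) d
  set n := Nat.find (hln' f) with hn_def
  have hnf : (⇑δ)^[n] f = 0 := Nat.find_spec (hln' f)
  have hnf' : ∀ k < n, (⇑δ)^[k] f ≠ 0 := fun k hk => Nat.find_min (hln' f) hk
  set m := Nat.find (hln' c) with hm_def
  have hmc : (⇑δ)^[m] c = 0 := Nat.find_spec (hln' c)
  have hmc' : ∀ k < m, (⇑δ)^[k] c ≠ 0 := fun k hk => Nat.find_min (hln' c) hk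
  have hn2 : 2 ≤ n := by
    by_contra hlt
    interval_cases n
    · exact hf0 hnf
    · exact hne hnf
  have hm1 : 1 ≤ m := by
    by_contra hlt
    exact hc0 (by simpa using hstab c m 0 hmc (by omega))
  set N := (n - 1) + (m - 1) with hN_def
  have hzero : (⇑δ)^[N] (f * c) = 0 := by
    rw [← hc, ← Function.iterate_succ_apply]
    exact hstab f n (N + 1) hnf (by omega)
  have hsum := lnd_iterate_leibniz δ N f c
  rw [hzero] at hsum
  have hsingle : ∑ k ∈ Finset.range N.succ,
      N.choose k • ((⇑δ)^[N - k] f * (⇑δ)^[k] c)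
      = N.choose (m - 1) • ((⇑δ)^[n - 1] f * (⇑δ)^[m - 1] c) := by
    rw [Finset.sum_eq_single (m - 1)]
    · have hNm : N - (m - 1) = n - 1 := by omega
      rw [hNm]
    · intro k hk hkne
      rw [Finset.mem_range] at hk
      rcases lt_or_gt_of_ne hkne with hlt | hgt
      · have : (⇑δ)^[N - k] f = 0 := hstab f n (N - k) hnf (by omega)
        rw [this, zero_mul, smul_zero]
      · have : (⇑δ)^[k] c = 0 := hstab c m k hmc (by omega)
        rw [this, mul_zero, smul_zero]
    · intro hnotin
      exact absurd (Finset.mem_range.mpr (by omega)) hnotin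
  rw [hsingle] at hsum
  have hne1 : (⇑δ)^[n - 1] f ≠ 0 := hnf' _ (by omega)
  have hne2 : (⇑δ)^[m - 1] c ≠ 0 := hmc' _ (by omega)
  have hchoose : N.choose (m - 1) ≠ 0 := (Nat.choose_pos (by omega : m - 1 ≤ N)).ne'
  have : N.choose (m - 1) • ((⇑δ)^[n - 1] f * (⇑δ)^[m - 1] c) ≠ 0 := by
    rw [nsmul_eq_mul]
    exact mul_ne_zero (Nat.cast_ne_zero.mpr hchoose) (mul_ne_zero hne1 hne2)
  exact this hsum.symm
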